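/- Given n ≥ 4 pairwise distinct positive real numbers r_1, ..., r_n, there exist points v_1, ..., v_n in ℝ³ with ‖v_i‖ = r_i for all i such that every v_i is an extreme point of the convex hull of {v_1, ..., v_n} and the origin lies in the interior of this convex hull. -/

import Mathlib

set_option maxHeartbeats 8000000 in
theorem stmt8 (n : ℕ) (hn : 4 ≤ n) (r : Fin n → ℝ)
    (hpos : ∀ i, 0 < r i) (hdist : Function.Injective r) :
    ∃ v : Fin n → EuclideanSpace ℝ (Fin 3),
      (∀ i, ‖v i‖ = r i) ∧
      (∀ i, v i ∉ convexHull ℝ (v '' {j | j ≠ i})) ∧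
      (0 : EuclideanSpace ℝ (Fin 3)) ∈ interior (convexHull ℝ (Set.range v)) := by
  haveI : NeZero n := ⟨by omega⟩
  set s : ℝ := (Finset.univ.inf' Finset.univ_nonempty r) / 2 with hs_def
  have hinf_pos : 0 < Finset.univ.inf' Finset.univ_nonempty r := by
    rw [Finset.lt_inf'_iff]
    exact fun i _ => hpos i
  have hs_pos : 0 < s := by rw [hs_def]; linarith
  have hs_lt : ∀ i, s < r i := by
    intro i
    have h1 : Finset.univ.inf' Finset.univ_nonempty r ≤ r i :=
      Finset.inf'_le r (Finset.mem_univ i)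
    rw [hs_def]; linarith
  -- parameter for points with index ≥ 4
  set q : Fin n → ℝ := fun i => ((i.val : ℝ))⁻¹ with hq_def
  have hq4 : ∀ i : Fin n, 4 ≤ i.val → 0 < q i ∧ q i < 1 := by
    intro i hi
    constructor
    · simp only [hq_def]
      exact inv_pos.mpr (by exact_mod_cast show 0 < i.val by omega)
    · simp only [hq_def]
      rw [inv_lt_one_iff₀]
      right
      exact_mod_cast by omega
  set X : Fin n → ℝ := fun i =>
    if i.val = 0 then s else if i.val = 1 then 0 else if i.val = 2 then -s
    else if i.val = 3 then 0 else s * (1 - q i ^ 2) / (1 + q i ^ 2) with hX_def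
  set Y : Fin n → ℝ := fun i =>
    if i.val = 0 then 0 else if i.val = 1 then s else if i.val = 2 then 0
    else if i.val = 3 then -s else s * (2 * q i) / (1 + q i ^ 2) with hY_def
  set Z : Fin n → ℝ := fun i =>
    (if i.val = 1 ∨ i.val = 3 then (-1 : ℝ) else 1) * Real.sqrt (r i ^ 2 - s ^ 2) with hZ_def
  set v : Fin n → EuclideanSpace ℝ (Fin 3) :=
    fun i => (WithLp.equiv 2 (Fin 3 → ℝ)).symm ![X i, Y i, Z i] with hv_def
  have hcases : ∀ i : Fin n, i.val = 0 ∨ i.val = 1 ∨ i.val = 2 ∨ i.val = 3 ∨ 4 ≤ i.val := by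
    intro i; omega
  -- points lie on the circle of radius s (in the plane)
  have hXY : ∀ i, X i ^ 2 + Y i ^ 2 = s ^ 2 := by
    intro i
    rcases hcases i with h | h | h | h | h
    · simp [hX_def, hY_def, h, -Fin.val_eq_zero_iff]
    · simp [hX_def, hY_def, h, -Fin.val_eq_zero_iff]
    · simp [hX_def, hY_def, h, -Fin.val_eq_zero_iff]
    · simp [hX_def, hY_def, h, -Fin.val_eq_zero_iff]
    · have h0 : ¬ i.val = 0 := by omega
      have h1 : ¬ i.val = 1 := by omega
      have h2 : ¬ i.val = 2 := by omega
      have h3 : ¬ i.val = 3 := by omega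
      simp only [hX_def, hY_def, if_neg h0, if_neg h1, if_neg h2, if_neg h3]
      have hd : (0:ℝ) < 1 + q i ^ 2 := by positivity
      field_simp
      ring
  have hZsq : ∀ i, Z i ^ 2 = r i ^ 2 - s ^ 2 := by
    intro i
    have h1 : Real.sqrt (r i ^ 2 - s ^ 2) ^ 2 = r i ^ 2 - s ^ 2 :=
      Real.sq_sqrt (by nlinarith [hs_lt i, hs_pos])
    simp only [hZ_def, mul_pow]
    split_ifs <;> norm_num [h1]
  -- key injectivity of the planar parts
  have hkey : ∀ i : Fin n,
      (X i = s ∧ Y i = 0 ∧ i.val = 0) ∨ (X i = 0 ∧ Y i = s ∧ i.val = 1) ∨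
      (X i = -s ∧ Y i = 0 ∧ i.val = 2) ∨ (X i = 0 ∧ Y i = -s ∧ i.val = 3) ∨
      (4 ≤ i.val ∧ X i = s * (1 - q i ^ 2) / (1 + q i ^ 2) ∧ 0 < X i ∧ 0 < Y i) := by
    intro i
    rcases hcases i with h | h | h | h | h
    · exact Or.inl ⟨by simp [hX_def, h, -Fin.val_eq_zero_iff], by simp [hY_def, h, -Fin.val_eq_zero_iff], h⟩
    · exact Or.inr (Or.inl ⟨by simp [hX_def, h, -Fin.val_eq_zero_iff], by simp [hY_def, h, -Fin.val_eq_zero_iff], h⟩)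
    · exact Or.inr (Or.inr (Or.inl ⟨by simp [hX_def, h, -Fin.val_eq_zero_iff], by simp [hY_def, h, -Fin.val_eq_zero_iff], h⟩))
    · exact Or.inr (Or.inr (Or.inr (Or.inl ⟨by simp [hX_def, h, -Fin.val_eq_zero_iff], by simp [hY_def, h, -Fin.val_eq_zero_iff], h⟩)))
    · refine Or.inr (Or.inr (Or.inr (Or.inr ⟨h, ?_, ?_, ?_⟩)))
      · have h0 : ¬ i.val = 0 := by omega
        have h1 : ¬ i.val = 1 := by omega
        have h2 : ¬ i.val = 2 := by omega
        have h3 : ¬ i.val = 3 := by omega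
        simp only [hX_def, if_neg h0, if_neg h1, if_neg h2, if_neg h3]
      · have h0 : ¬ i.val = 0 := by omega
        have h1 : ¬ i.val = 1 := by omega
        have h2 : ¬ i.val = 2 := by omega
        have h3 : ¬ i.val = 3 := by omega
        simp only [hX_def, if_neg h0, if_neg h1, if_neg h2, if_neg h3]
        obtain ⟨hq1, hq2⟩ := hq4 i h
        exact div_pos (mul_pos hs_pos (by nlinarith)) (by positivity)
      · have h0 : ¬ i.val = 0 := by omega
        have h1 : ¬ i.val = 1 := by omega
        have h2 : ¬ i.val = 2 := by omega
        have h3 : ¬ i.val = 3 := by omega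
        simp only [hY_def, if_neg h0, if_neg h1, if_neg h2, if_neg h3]
        obtain ⟨hq1, hq2⟩ := hq4 i h
        exact div_pos (mul_pos hs_pos (by linarith)) (by positivity)
  have hbigbig : ∀ i j : Fin n, 4 ≤ i.val → 4 ≤ j.val →
      X i = s * (1 - q i ^ 2) / (1 + q i ^ 2) → X j = s * (1 - q j ^ 2) / (1 + q j ^ 2) →
      X i = X j → i = j := by
    intro i j hi hj hxi hxj hx
    obtain ⟨hqi1, hqi2⟩ := hq4 i hi
    obtain ⟨hqj1, hqj2⟩ := hq4 j hj
    rw [hxi, hxj] at hx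
    have hdi : (0:ℝ) < 1 + q i ^ 2 := by positivity
    have hdj : (0:ℝ) < 1 + q j ^ 2 := by positivity
    have hx' : s * (1 - q i ^ 2) * (1 + q j ^ 2) = s * (1 - q j ^ 2) * (1 + q i ^ 2) := by
      rw [div_eq_div_iff hdi.ne' hdj.ne'] at hx
      linarith
    have h5 : s * (2 * (q j ^ 2 - q i ^ 2)) = 0 := by linear_combination hx'
    have h6 : q j ^ 2 - q i ^ 2 = 0 := by
      rcases mul_eq_zero.mp h5 with h | h
      · exact absurd h (by linarith)
      · linarith
    have h7 : (q i - q j) * (q i + q j) = 0 := by linear_combination -h6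
    have h8 : q i = q j := by
      rcases mul_eq_zero.mp h7 with h | h
      · linarith
      · exact absurd h (by linarith)
    simp only [hq_def] at h8
    have h9 : ((i.val : ℝ)) = ((j.val : ℝ)) := inv_inj.mp h8
    exact Fin.ext (by exact_mod_cast h9)
  have hinj : ∀ i j : Fin n, X i = X j → Y i = Y j → i = j := by
    intro i j hx hy
    rcases hkey i with ⟨h1, h2, h3⟩ | ⟨h1, h2, h3⟩ | ⟨h1, h2, h3⟩ | ⟨h1, h2, h3⟩ | ⟨h1, h2, h3, h4⟩ <;>
      rcases hkey j with ⟨g1, g2, g3⟩ | ⟨g1, g2, g3⟩ | ⟨g1, g2, g3⟩ | ⟨g1, g2, g3⟩ | ⟨g1, g2, g3, g4⟩ <;>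
      first
        | exact Fin.ext (by omega)
        | (exfalso; rw [h1, g1] at hx; rw [h2, g2] at hy; linarith)
        | (exfalso; rw [h1] at hx; rw [h2] at hy; linarith)
        | (exfalso; rw [g1] at hx; rw [g2] at hy; linarith)
        | exact hbigbig i j h1 g1 h2 g2 hx
  -- coordinates of v
  have hv0 : ∀ i, v i 0 = X i := by intro i; simp [hv_def]
  have hv1 : ∀ i, v i 1 = Y i := by intro i; simp [hv_def]
  have hv2 : ∀ i, v i 2 = Z i := by intro i; simp [hv_def]
  refine ⟨v, ?_, ?_, ?_⟩
  · -- norms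
    intro i
    rw [EuclideanSpace.norm_eq]
    have hsum : ∑ k : Fin 3, ‖v i k‖ ^ 2 = r i ^ 2 := by
      rw [Fin.sum_univ_three, hv0, hv1, hv2]
      simp only [Real.norm_eq_abs, sq_abs]
      have := hXY i
      have := hZsq i
      linarith
    rw [hsum, Real.sqrt_sq (hpos i).le]
  · -- extreme points
    intro i hmem
    set f : EuclideanSpace ℝ (Fin 3) → ℝ := fun p => X i * p 0 + Y i * p 1 with hf_def
    have hlin : IsLinearMap ℝ f := by
      constructor
      · intro x y
        simp only [hf_def, PiLp.add_apply]
        ring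
      · intro c x
        simp only [hf_def, PiLp.smul_apply, smul_eq_mul]
        ring
    have hsub : v '' {j | j ≠ i} ⊆ {p | f p < s ^ 2} := by
      rintro _ ⟨j, hj, rfl⟩
      have hji : ¬ (X j = X i ∧ Y j = Y i) := by
        rintro ⟨hh1, hh2⟩; exact hj (hinj j i hh1 hh2)
      have hpos2 : 0 < (X i - X j) ^ 2 + (Y i - Y j) ^ 2 := by
        rcases not_and_or.mp hji with h | h
        · have h' : X i - X j ≠ 0 := sub_ne_zero.mpr (fun hh => h hh.symm)
          nlinarith [sq_nonneg (Y i - Y j), sq_pos_of_ne_zero h']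
        · have h' : Y i - Y j ≠ 0 := sub_ne_zero.mpr (fun hh => h hh.symm)
          nlinarith [sq_nonneg (X i - X j), sq_pos_of_ne_zero h']
      show f (v j) < s ^ 2
      rw [hf_def]
      simp only [hv0, hv1]
      have hxyi := hXY i
      have hxyj := hXY j
      nlinarith
    have hcontained := convexHull_min hsub (convex_halfSpace_lt hlin _) hmem
    have hfv : f (v i) = s ^ 2 := by
      rw [hf_def]
      simp only [hv0, hv1]
      have := hXY i
      linarith
    rw [Set.mem_setOf_eq, hfv] at hcontained
    exact lt_irrefl _ hcontained
  · -- 0 in interior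
    set I0 : Fin n := ⟨0, by omega⟩ with hI0
    set I1 : Fin n := ⟨1, by omega⟩ with hI1
    set I2 : Fin n := ⟨2, by omega⟩ with hI2
    set I3 : Fin n := ⟨3, by omega⟩ with hI3
    set a : ℝ := Real.sqrt (r I0 ^ 2 - s ^ 2) with ha_def
    set b : ℝ := Real.sqrt (r I1 ^ 2 - s ^ 2) with hb_def
    set c : ℝ := Real.sqrt (r I2 ^ 2 - s ^ 2) with hc_def
    set d : ℝ := Real.sqrt (r I3 ^ 2 - s ^ 2) with hd_def
    have ha : 0 < a := Real.sqrt_pos.mpr (by nlinarith [hs_lt I0, hs_pos])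
    have hb : 0 < b := Real.sqrt_pos.mpr (by nlinarith [hs_lt I1, hs_pos])
    have hc : 0 < c := Real.sqrt_pos.mpr (by nlinarith [hs_lt I2, hs_pos])
    have hd : 0 < d := Real.sqrt_pos.mpr (by nlinarith [hs_lt I3, hs_pos])
    -- coordinates of the four special points
    have hX0 : X I0 = s := by simp [hX_def, hI0]
    have hY0 : Y I0 = 0 := by simp [hY_def, hI0]
    have hZ0 : Z I0 = a := by simp [hZ_def, hI0, ha_def]
    have hX1 : X I1 = 0 := by simp [hX_def, hI1]
    have hY1 : Y I1 = s := by simp [hY_def, hI1]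
    have hZ1 : Z I1 = -b := by simp [hZ_def, hI1, hb_def]
    have hX2 : X I2 = -s := by simp [hX_def, hI2]
    have hY2 : Y I2 = 0 := by simp [hY_def, hI2]
    have hZ2 : Z I2 = c := by simp [hZ_def, hI2, hc_def]
    have hX3 : X I3 = 0 := by simp [hX_def, hI3]
    have hY3 : Y I3 = -s := by simp [hY_def, hI3]
    have hZ3 : Z I3 = -d := by simp [hZ_def, hI3, hd_def]
    set p : Fin 4 → EuclideanSpace ℝ (Fin 3) := ![v I0, v I1, v I2, v I3] with hp_def
    have hp0 : p 0 = v I0 := rfl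
    have hp1 : p 1 = v I1 := rfl
    have hp2 : p 2 = v I2 := rfl
    have hp3 : p 3 = v I3 := rfl
    have hind : AffineIndependent ℝ p := by
      rw [affineIndependent_iff]
      intro t w hw0 hsum e he
      set w' : Fin 4 → ℝ := fun k => if k ∈ t then w k else 0 with hw'_def
      have hw'sum : ∑ k : Fin 4, w' k = 0 := by
        rw [hw'_def]
        rw [Finset.sum_ite_mem, Finset.univ_inter]
        exact hw0
      have hw'vec : ∑ k : Fin 4, w' k • p k = 0 := by
        have : ∑ k : Fin 4, w' k • p k = ∑ k ∈ t, w k • p k := by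
          rw [hw'_def]
          simp only [ite_smul, zero_smul]
          rw [Finset.sum_ite_mem, Finset.univ_inter]
        rw [this, hsum]
      have hcoords : ∀ m : Fin 3,
          w' 0 * (p 0 m) + w' 1 * (p 1 m) + w' 2 * (p 2 m) + w' 3 * (p 3 m) = 0 := by
        intro m
        have h := hw'vec
        rw [Fin.sum_univ_four] at h
        have h2 : (w' 0 • p 0 + w' 1 • p 1 + w' 2 • p 2 + w' 3 • p 3) m
            = (0 : EuclideanSpace ℝ (Fin 3)) m := by rw [h]
        simpa [PiLp.add_apply, PiLp.smul_apply, smul_eq_mul] using h2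
      have e0 := hcoords 0
      have e1 := hcoords 1
      have e2 := hcoords 2
      rw [hp0, hp1, hp2, hp3] at e0 e1 e2
      rw [hv0, hv0, hv0, hv0, hX0, hX1, hX2, hX3] at e0
      rw [hv1, hv1, hv1, hv1, hY0, hY1, hY2, hY3] at e1
      rw [hv2, hv2, hv2, hv2, hZ0, hZ1, hZ2, hZ3] at e2
      rw [Fin.sum_univ_four] at hw'sum
      have h02 : w' 0 = w' 2 := by
        have hh : (w' 0 - w' 2) * s = 0 := by linear_combination e0
        rcases mul_eq_zero.mp hh with h | h
        · linarith
        · exact absurd h (by linarith)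
      have h13 : w' 1 = w' 3 := by
        have hh : (w' 1 - w' 3) * s = 0 := by linear_combination e1
        rcases mul_eq_zero.mp hh with h | h
        · linarith
        · exact absurd h (by linarith)
      have h10 : w' 1 = -w' 0 := by linarith
      have hzero : w' 0 * (a + b + c + d) = 0 := by
        rw [← h02, ← h13, h10] at e2
        linear_combination e2
      have hw0' : w' 0 = 0 := by
        rcases mul_eq_zero.mp hzero with h | h
        · exact h
        · exact absurd h (by linarith)
      have hall : ∀ k : Fin 4, w' k = 0 := by
        have q1 : w' 1 = 0 := by rw [h10, hw0']; ring
        have q2 : w' 2 = 0 := by rw [← h02]; exact hw0'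
        have q3 : w' 3 = 0 := by rw [← h13]; exact q1
        intro k
        fin_cases k <;> assumption
      have h := hall e
      simp only [hw'_def] at h
      rwa [if_pos he] at h
    have hspan : affineSpan ℝ (Set.range p) = ⊤ := by
      rw [hind.affineSpan_eq_top_iff_card_eq_finrank_add_one]
      simp [finrank_euclideanSpace_fin]
    set bas : AffineBasis (Fin 4) ℝ (EuclideanSpace ℝ (Fin 3)) := ⟨p, hind, hspan⟩ with hbas_def
    set T : ℝ := a + b + c + d with hT_def
    have hT : 0 < T := by rw [hT_def]; linarith
    set α : ℝ := (b + d) / (2 * T) with hα_def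
    set β : ℝ := (a + c) / (2 * T) with hβ_def
    have hα : 0 < α := div_pos (by linarith) (by linarith)
    have hβ : 0 < β := div_pos (by linarith) (by linarith)
    set wt : Fin 4 → ℝ := ![α, β, α, β] with hwt_def
    have hwt1 : ∑ k : Fin 4, wt k = 1 := by
      rw [Fin.sum_univ_four]
      simp only [hwt_def, Matrix.cons_val_zero, Matrix.cons_val_one, Matrix.head_cons,
        Matrix.cons_val_two, Matrix.tail_cons, Matrix.cons_val_three]
      rw [hα_def, hβ_def, hT_def]
      field_simp
      ring
    have hcomb : Finset.univ.affineCombination ℝ p wt = (0 : EuclideanSpace ℝ (Fin 3)) := by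
      rw [Finset.univ.affineCombination_eq_linear_combination p wt hwt1]
      apply PiLp.ext
      intro m
      have happ : ∀ m : Fin 3, (∑ k : Fin 4, wt k • p k) m
          = wt 0 * (p 0 m) + wt 1 * (p 1 m) + wt 2 * (p 2 m) + wt 3 * (p 3 m) := by
        intro m
        rw [Fin.sum_univ_four]
        simp [PiLp.add_apply, PiLp.smul_apply, smul_eq_mul]
      have hwt0' : wt 0 = α := rfl
      have hwt1' : wt 1 = β := rfl
      have hwt2' : wt 2 = α := rfl
      have hwt3' : wt 3 = β := rfl
      have key0 : (∑ k : Fin 4, wt k • p k) 0 = (0 : EuclideanSpace ℝ (Fin 3)) 0 := by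
        rw [happ 0, hwt0', hwt1', hwt2', hwt3', hp0, hp1, hp2, hp3,
          hv0, hv0, hv0, hv0, hX0, hX1, hX2, hX3]
        have hz : (0 : EuclideanSpace ℝ (Fin 3)) 0 = 0 := rfl
        rw [hz]
        ring
      have key1 : (∑ k : Fin 4, wt k • p k) 1 = (0 : EuclideanSpace ℝ (Fin 3)) 1 := by
        rw [happ 1, hwt0', hwt1', hwt2', hwt3', hp0, hp1, hp2, hp3,
          hv1, hv1, hv1, hv1, hY0, hY1, hY2, hY3]
        have hz : (0 : EuclideanSpace ℝ (Fin 3)) 1 = 0 := rfl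
        rw [hz]
        ring
      have key2 : (∑ k : Fin 4, wt k • p k) 2 = (0 : EuclideanSpace ℝ (Fin 3)) 2 := by
        rw [happ 2, hwt0', hwt1', hwt2', hwt3', hp0, hp1, hp2, hp3,
          hv2, hv2, hv2, hv2, hZ0, hZ1, hZ2, hZ3]
        have hz : (0 : EuclideanSpace ℝ (Fin 3)) 2 = 0 := rfl
        rw [hz, hα_def, hβ_def]
        field_simp
        ring
      fin_cases m
      · exact key0
      · exact key1
      · exact key2
    have hcoord : ∀ k, bas.coord k (0 : EuclideanSpace ℝ (Fin 3)) = wt k := by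
      intro k
      rw [← hcomb]
      exact bas.coord_apply_combination_of_mem (Finset.mem_univ k) hwt1
    have hbcoe : ⇑bas = p := rfl
    have h0mem : (0 : EuclideanSpace ℝ (Fin 3)) ∈ interior (convexHull ℝ (Set.range p)) := by
      rw [← hbcoe, bas.interior_convexHull]
      intro k
      rw [hcoord]
      fin_cases k
      · exact hα
      · exact hβ
      · exact hα
      · exact hβ
    have hrange : Set.range p ⊆ Set.range v := by
      rintro x ⟨k, rfl⟩
      fin_cases k
      · exact ⟨I0, rfl⟩
      · exact ⟨I1, rfl⟩
      · exact ⟨I2, rfl⟩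
      · exact ⟨I3, rfl⟩
    exact interior_mono (convexHull_mono hrange) h0mem
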